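/- Let ρ be a d×d complex matrix and A_1, …, A_n be d×d complex matrices. On ℂ^d ⊗ ℂ^n define P_i = 1 ⊗ |i⟩⟨i| and M = ∑_{k,l=1}^n (A_k ρ A_l†) ⊗ |k⟩⟨l|. Then for all i ≠ j: P_i M P_j = (A_i ρ A_j†) ⊗ |i⟩⟨j| and ‖ P_i M P_j ‖₁ = ‖ A_i ρ A_j† ‖₁. Consequently ∑_{i≠j} ‖P_i M P_j‖₁ = ∑_{i≠j} ‖A_i ρ A_j†‖₁, i.e., the ℓ₁-norm of POVM-based coherence evaluated on the canonical Naimark extension admits the local expression C_{ℓ₁}(ρ,E) = ∑_{i≠j} ‖A_i ρ A_j†‖₁. -/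

import Mathlib

open Matrix Kronecker
open scoped ComplexOrder

/-- The positive semidefinite square root of a positive semidefinite matrix, as
`Matrix.PosSemidef.sqrt` was defined in the older Mathlib (since removed). -/
noncomputable def posSemidefSqrtOld {n : Type*} [Fintype n] [DecidableEq n]
    {A : Matrix n n ℂ} (hA : A.PosSemidef) : Matrix n n ℂ :=
  (hA.1.eigenvectorUnitary : Matrix n n ℂ) *
    diagonal (fun i => ((Real.sqrt (hA.1.eigenvalues i) : ℝ) : ℂ)) *
    (star hA.1.eigenvectorUnitary : Matrix n n ℂ)

/-- The trace norm `‖A‖₁ = tr √(Aᴴ A)` of a complex matrix. -/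
noncomputable def traceNorm {m n : Type*} [Fintype m] [Fintype n] [DecidableEq n]
    (A : Matrix m n ℂ) : ℝ :=
  (posSemidefSqrtOld (Matrix.posSemidef_conjTranspose_mul_self A)).trace.re

section
open scoped MatrixOrder
lemma posSemidefSqrtOld_eq_cfc {n : Type*} [Fintype n] [DecidableEq n]
    {A : Matrix n n ℂ} (hA : A.PosSemidef) : posSemidefSqrtOld hA = CFC.sqrt A := by
  rw [CFC.sqrt_eq_cfc, cfc_nnreal_eq_real _ A, hA.1.cfc_eq, Matrix.IsHermitian.cfc, posSemidefSqrtOld]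
  congr 3
  funext i
  simp [Real.coe_sqrt, Real.coe_toNNReal', max_eq_left (hA.eigenvalues_nonneg i)]
end

lemma posSemidefSqrtOld_posSemidef {n : Type*} [Fintype n] [DecidableEq n]
    {A : Matrix n n ℂ} (hA : A.PosSemidef) : (posSemidefSqrtOld hA).PosSemidef := by
  open scoped MatrixOrder in
  rw [posSemidefSqrtOld_eq_cfc]; exact (CFC.sqrt_nonneg A).posSemidef

lemma posSemidefSqrtOld_mul_self {n : Type*} [Fintype n] [DecidableEq n]
    {A : Matrix n n ℂ} (hA : A.PosSemidef) : posSemidefSqrtOld hA * posSemidefSqrtOld hA = A := by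
  open scoped MatrixOrder in
  rw [posSemidefSqrtOld_eq_cfc]; exact CFC.sqrt_mul_sqrt_self A hA.nonneg

lemma posSemidefSqrtOld_eq_of_sq_eq {n : Type*} [Fintype n] [DecidableEq n]
    {A B : Matrix n n ℂ} (hB : B.PosSemidef) (hA : A.PosSemidef) (h : B ^ 2 = A) :
    B = posSemidefSqrtOld hA := by
  open scoped MatrixOrder in
  rw [posSemidefSqrtOld_eq_cfc]; exact (CFC.sqrt_unique (by rw [← pow_two, h]) hB.nonneg).symm


lemma kron_conjT {m n p q : Type*}
    (X : Matrix m n ℂ) (Y : Matrix p q ℂ) :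
    (X ⊗ₖ Y)ᴴ = Xᴴ ⊗ₖ Yᴴ := by
  ext ⟨a, b⟩ ⟨c, d⟩
  simp [Matrix.conjTranspose_apply, Matrix.kroneckerMap_apply]

lemma posSemidef_kron {m p : Type*} [Fintype m] [Fintype p] [DecidableEq m] [DecidableEq p]
    {X : Matrix m m ℂ} {Y : Matrix p p ℂ} (hX : X.PosSemidef) (hY : Y.PosSemidef) :
    (X ⊗ₖ Y).PosSemidef := by
  have h : X ⊗ₖ Y = (posSemidefSqrtOld hX ⊗ₖ posSemidefSqrtOld hY)ᴴ * (posSemidefSqrtOld hX ⊗ₖ posSemidefSqrtOld hY) := by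
    rw [kron_conjT, ← Matrix.mul_kronecker_mul, (posSemidefSqrtOld_posSemidef hX).1, (posSemidefSqrtOld_posSemidef hY).1,
      posSemidefSqrtOld_mul_self hX, posSemidefSqrtOld_mul_self hY]
  rw [h]
  exact Matrix.posSemidef_conjTranspose_mul_self _

lemma stdBasis_conjT {p : Type*} [DecidableEq p] (i j : p) :
    (Matrix.single i j (1 : ℂ))ᴴ = Matrix.single j i (1 : ℂ) := by
  ext a b
  simp [Matrix.conjTranspose_apply, Matrix.single, and_comm]

lemma stdBasis_posSemidef {p : Type*} [Fintype p] [DecidableEq p] (j : p) :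
    (Matrix.single j j (1 : ℂ)).PosSemidef := by
  have h : Matrix.single j j (1 : ℂ) =
      (Matrix.single j j (1 : ℂ))ᴴ * Matrix.single j j (1 : ℂ) := by
    rw [stdBasis_conjT, Matrix.single_mul_single_same, one_mul]
  rw [h]
  exact Matrix.posSemidef_conjTranspose_mul_self _

lemma stdBasis_trace {p : Type*} [Fintype p] [DecidableEq p] (j : p) :
    (Matrix.single j j (1 : ℂ)).trace = 1 := by
  simp [Matrix.trace, Matrix.diag, Matrix.single]

lemma traceNorm_kron_std {n d : ℕ} (X : Matrix (Fin d) (Fin d) ℂ) (i j : Fin n) :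
    traceNorm (X ⊗ₖ Matrix.single i j (1 : ℂ)) = traceNorm X := by
  set E := Matrix.single i j (1 : ℂ) with hE
  set S := posSemidefSqrtOld (Matrix.posSemidef_conjTranspose_mul_self X) with hS
  have hSpsd : S.PosSemidef := posSemidefSqrtOld_posSemidef (Matrix.posSemidef_conjTranspose_mul_self X)
  have hPpsd : (S ⊗ₖ Matrix.single j j (1 : ℂ)).PosSemidef :=
    posSemidef_kron hSpsd (stdBasis_posSemidef j)
  have hsq : (S ⊗ₖ Matrix.single j j (1 : ℂ)) ^ 2 = (X ⊗ₖ E)ᴴ * (X ⊗ₖ E) := by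
    rw [pow_two, ← Matrix.mul_kronecker_mul, kron_conjT, ← Matrix.mul_kronecker_mul,
      posSemidefSqrtOld_mul_self (Matrix.posSemidef_conjTranspose_mul_self X), hE, stdBasis_conjT,
      Matrix.single_mul_single_same, Matrix.single_mul_single_same, one_mul]
  have key := posSemidefSqrtOld_eq_of_sq_eq hPpsd (Matrix.posSemidef_conjTranspose_mul_self (X ⊗ₖ E)) hsq
  unfold traceNorm
  rw [← key, Matrix.trace_kronecker, stdBasis_trace, mul_one]

/-- On `ℂ^d ⊗ ℂ^n`, let `P i = 1 ⊗ |i⟩⟨i|` and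
`M = ∑ k l, (A k ρ A lᴴ) ⊗ |k⟩⟨l|` (the canonical Naimark embedding). Then for all `i ≠ j`:
`P i * M * P j = (A i ρ A jᴴ) ⊗ |i⟩⟨j|` and `‖P i M P j‖₁ = ‖A i ρ A jᴴ‖₁`; consequently
`∑_{i ≠ j} ‖P i M P j‖₁ = ∑_{i ≠ j} ‖A i ρ A jᴴ‖₁`. -/
theorem l1_povm_coherence_local_expression
    (n d : ℕ) (ρ : Matrix (Fin d) (Fin d) ℂ)
    (A : Fin n → Matrix (Fin d) (Fin d) ℂ)
    (P : Fin n → Matrix (Fin d × Fin n) (Fin d × Fin n) ℂ)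
    (hP : ∀ i, P i = (1 : Matrix (Fin d) (Fin d) ℂ) ⊗ₖ Matrix.single i i (1 : ℂ))
    (M : Matrix (Fin d × Fin n) (Fin d × Fin n) ℂ)
    (hM : M = ∑ k, ∑ l, (A k * ρ * (A l)ᴴ) ⊗ₖ Matrix.single k l (1 : ℂ)) :
    (∀ i j, i ≠ j →
        P i * M * P j = (A i * ρ * (A j)ᴴ) ⊗ₖ Matrix.single i j (1 : ℂ) ∧
        traceNorm (P i * M * P j) = traceNorm (A i * ρ * (A j)ᴴ)) ∧
      ∑ q ∈ (Finset.univ : Finset (Fin n)).offDiag, traceNorm (P q.1 * M * P q.2)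
        = ∑ q ∈ (Finset.univ : Finset (Fin n)).offDiag, traceNorm (A q.1 * ρ * (A q.2)ᴴ) := by
  have hkey : ∀ i j : Fin n,
      P i * M * P j = (A i * ρ * (A j)ᴴ) ⊗ₖ Matrix.single i j (1 : ℂ) := by
    intro i j
    rw [hP, hP, hM, Finset.mul_sum, Finset.sum_mul]
    rw [Finset.sum_eq_single i]
    · rw [Finset.mul_sum, Finset.sum_mul, Finset.sum_eq_single j]
      · rw [← Matrix.mul_kronecker_mul, ← Matrix.mul_kronecker_mul,
          Matrix.single_mul_single_same, Matrix.single_mul_single_same, one_mul, mul_one,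
          one_mul, mul_one]
      · intro l _ hl
        rw [← Matrix.mul_kronecker_mul, ← Matrix.mul_kronecker_mul]
        simp [hl]
      · intro h; exact absurd (Finset.mem_univ j) h
    · intro k _ hk
      rw [Finset.mul_sum, Finset.sum_mul]
      apply Finset.sum_eq_zero
      intro l _
      rw [← Matrix.mul_kronecker_mul]
      have : Matrix.single i i (1:ℂ) * Matrix.single k l (1:ℂ) = 0 :=
        Matrix.single_mul_single_of_ne _ _ _ _ (Ne.symm hk) _
      simp [this]
    · intro h; exact absurd (Finset.mem_univ i) h
  constructor
  · intro i j _
    exact ⟨hkey i j, by rw [hkey i j, traceNorm_kron_std]⟩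
  · apply Finset.sum_congr rfl
    intro q _
    rw [hkey q.1 q.2, traceNorm_kron_std]
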